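/- Let φ be an automorphism of a finite nilpotent group G of order coprime to |G|. Then the map θ : x ↦ x⁻¹·φ(x), restricted to the set K = {g⁻¹ φ(g) : g ∈ G}, is injective (equivalently, bijective from K to K). -/

import Mathlib

universe u

private lemma center_nontrivial_of_nilpotent (G : Type u) [Group G] [Group.IsNilpotent G]
    [Nontrivial G] : Nontrivial (Subgroup.center G) := by
  by_contra hns
  have hbot : Subgroup.center G = ⊥ := by
    rcases Subgroup.bot_or_nontrivial (Subgroup.center G) with h | h
    · exact h
    · exact absurd h hns
  have hall : ∀ n, Subgroup.upperCentralSeries G n = ⊥ := by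
    intro n
    induction n with
    | zero => simp
    | succ n ih =>
      ext x
      simp only [Subgroup.mem_upperCentralSeries_succ_iff, ih, Subgroup.mem_bot, commutatorElement_def]
      constructor
      · intro hx
        have hxc : x ∈ Subgroup.center G := by
          rw [Subgroup.mem_center_iff]
          intro y
          have := hx y
          rw [mul_inv_eq_one, mul_inv_eq_iff_eq_mul] at this
          rw [this]
        rw [hbot, Subgroup.mem_bot] at hxc
        exact hxc
      · intro hx; subst hx; intro y; group
  obtain ⟨n, hn⟩ := Group.IsNilpotent.nilpotent (G := G)
  rw [hall n] at hn
  obtain ⟨x, hx⟩ := exists_ne (1 : G)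
  exact hx (Subgroup.mem_bot.mp (hn ▸ Subgroup.mem_top x))

private lemma alg_fix {G : Type u} [Group G] (φ : MulAut G) {a b : G}
    (hab : a⁻¹ * φ a = b⁻¹ * φ b) (hcc : ∀ x : G, (a⁻¹ * b) * x = x * (a⁻¹ * b)) :
    φ (a⁻¹ * b) = a⁻¹ * b := by
  have h1 : φ (a⁻¹ * b) = (φ a)⁻¹ * φ b := by rw [map_mul, map_inv]
  have h2 : φ a = a * (a⁻¹ * φ a) := by group
  have h3 : φ b = b * (b⁻¹ * φ b) := by group
  rw [h1, h2, h3, ← hab]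
  have key : ∀ t : G, (a * t)⁻¹ * (b * t) = t⁻¹ * ((a⁻¹ * b) * t) := by intro t; group
  rw [key, hcc, ← mul_assoc, inv_mul_cancel, one_mul]

private lemma alg_u {G : Type u} [Group G] (φ : MulAut G) {a b g h c : G}
    (hg : a = g⁻¹ * φ g) (hh : b = h⁻¹ * φ h) (hcdef : c = a⁻¹ * b)
    (hcc : ∀ x : G, c * x = x * c) :
    φ (h * g⁻¹) = (h * g⁻¹) * c := by
  have hφg : φ g = g * a := by rw [hg]; group
  have hφh : φ h = h * b := by rw [hh]; group
  have h1 : φ (h * g⁻¹) = φ h * (φ g)⁻¹ := by rw [map_mul, map_inv]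
  have hb' : b = a * c := by rw [hcdef]; group
  rw [h1, hφg, hφh, hb']
  have h2 : h * (a * c) * (g * a)⁻¹ = h * (a * c * a⁻¹) * g⁻¹ := by group
  rw [h2, ← hcc a, mul_assoc c a a⁻¹, mul_inv_cancel, mul_one, mul_assoc, hcc, ← mul_assoc]

private lemma fix_one {G : Type u} [Group G] [Finite G] (φ : MulAut G)
    (hcop : Nat.Coprime (orderOf φ) (Nat.card G)) (c u : G)
    (hcc : ∀ x : G, c * x = x * c) (hφc : φ c = c) (hφu : φ u = u * c) : c = 1 := by
  have hφck : ∀ k : ℕ, φ (c ^ k) = c ^ k := fun k => by rw [map_pow, hφc]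
  have hk : ∀ k : ℕ, (φ ^ k) u = u * c ^ k := by
    intro k
    induction k with
    | zero => simp
    | succ k ihk =>
      rw [pow_succ' φ k, MulAut.mul_apply, ihk, map_mul, hφu, hφck, pow_succ' c k, ← mul_assoc]
  have h1 : u * 1 = u * c ^ orderOf φ := by
    rw [mul_one, ← hk, pow_orderOf_eq_one]
    rfl
  have hcn : c ^ orderOf φ = 1 := (mul_left_cancel h1).symm
  have hd1 : orderOf c ∣ orderOf φ := orderOf_dvd_of_pow_eq_one hcn
  have hd2 : orderOf c ∣ Nat.card G := orderOf_dvd_natCard c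
  have hd : orderOf c ∣ Nat.gcd (orderOf φ) (Nat.card G) := Nat.dvd_gcd hd1 hd2
  rw [hcop] at hd
  exact orderOf_eq_one_iff.mp (Nat.eq_one_of_dvd_one hd)

private lemma key_aux : ∀ (n : ℕ) (G : Type u) [Group G] [Finite G] [Group.IsNilpotent G]
    (φ : MulAut G), Nat.card G ≤ n → Nat.Coprime (orderOf φ) (Nat.card G) →
    Set.InjOn (fun x : G => x⁻¹ * φ x) {x : G | ∃ g : G, x = g⁻¹ * φ g} := by
  intro n
  induction n using Nat.strong_induction_on with
  | _ n ih =>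
  intro G _ _ _ φ hcard hcop
  rcases subsingleton_or_nontrivial G with hs | hnt
  · exact fun a _ b _ _ => Subsingleton.elim a b
  have hZnt : Nontrivial (Subgroup.center G) := center_nontrivial_of_nilpotent G
  have hmap : (Subgroup.center G).map (φ : G →* G) = Subgroup.center G :=
    Subgroup.characteristic_iff_map_eq.mp inferInstance (φ : G ≃* G)
  let ψ : MulAut (G ⧸ Subgroup.center G) :=
    QuotientGroup.congr (Subgroup.center G) (Subgroup.center G) (φ : G ≃* G) hmap
  have hψmk : ∀ g : G, ψ ((g : G ⧸ Subgroup.center G)) = ((φ g : G) : G ⧸ Subgroup.center G) :=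
    fun g => rfl
  have hpow : ∀ (k : ℕ) (g : G),
      (ψ ^ k) ((g : G ⧸ Subgroup.center G)) = (((φ ^ k) g : G) : G ⧸ Subgroup.center G) := by
    intro k
    induction k with
    | zero => intro g; simp
    | succ k ihk =>
      intro g
      rw [pow_succ' ψ k, pow_succ' φ k, MulAut.mul_apply, MulAut.mul_apply, ihk, hψmk]
  have hord : orderOf ψ ∣ orderOf φ := by
    apply orderOf_dvd_of_pow_eq_one
    ext x
    refine QuotientGroup.induction_on x fun g => ?_
    rw [hpow, pow_orderOf_eq_one φ]
    rfl
  have hcardQ_lt : Nat.card (G ⧸ Subgroup.center G) < Nat.card G := by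
    have h1 : Nat.card G = Nat.card (G ⧸ Subgroup.center G) * Nat.card (Subgroup.center G) :=
      Subgroup.card_eq_card_quotient_mul_card_subgroup _
    have h2 : 1 < Nat.card (Subgroup.center G) := Finite.one_lt_card
    have h3 : 0 < Nat.card (G ⧸ Subgroup.center G) := Nat.card_pos
    rw [h1]
    exact (lt_mul_iff_one_lt_right h3).mpr h2
  have hcop' : Nat.Coprime (orderOf ψ) (Nat.card (G ⧸ Subgroup.center G)) :=
    Nat.Coprime.coprime_dvd_left hord
      (Nat.Coprime.coprime_dvd_right (Subgroup.card_quotient_dvd_card _) hcop)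
  have IH := ih (Nat.card (G ⧸ Subgroup.center G)) (lt_of_lt_of_le hcardQ_lt hcard)
    (G ⧸ Subgroup.center G) ψ le_rfl hcop'
  intro a ha b hb hab
  obtain ⟨g, hg⟩ := ha
  obtain ⟨h, hh⟩ := hb
  simp only at hab
  have haQ : ((a : G ⧸ Subgroup.center G)) ∈
      {x : G ⧸ Subgroup.center G | ∃ y, x = y⁻¹ * ψ y} :=
    ⟨(g : G ⧸ Subgroup.center G), by
      rw [hg, hψmk, QuotientGroup.mk_mul, QuotientGroup.mk_inv]⟩
  have hbQ : ((b : G ⧸ Subgroup.center G)) ∈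
      {x : G ⧸ Subgroup.center G | ∃ y, x = y⁻¹ * ψ y} :=
    ⟨(h : G ⧸ Subgroup.center G), by
      rw [hh, hψmk, QuotientGroup.mk_mul, QuotientGroup.mk_inv]⟩
  have habQ : (fun x : G ⧸ Subgroup.center G => x⁻¹ * ψ x) (a : G ⧸ Subgroup.center G) =
      (fun x : G ⧸ Subgroup.center G => x⁻¹ * ψ x) (b : G ⧸ Subgroup.center G) := by
    simp only [hψmk]
    rw [← QuotientGroup.mk_inv, ← QuotientGroup.mk_mul, ← QuotientGroup.mk_inv,
      ← QuotientGroup.mk_mul, hab]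
  have hQeq := IH haQ hbQ habQ
  have hcZ : a⁻¹ * b ∈ Subgroup.center G := (QuotientGroup.eq).mp hQeq
  have hcc : ∀ x : G, (a⁻¹ * b) * x = x * (a⁻¹ * b) :=
    fun x => (Subgroup.mem_center_iff.mp hcZ x).symm
  have hφc : φ (a⁻¹ * b) = a⁻¹ * b := alg_fix φ hab hcc
  have hφu : φ (h * g⁻¹) = (h * g⁻¹) * (a⁻¹ * b) := alg_u φ hg hh rfl hcc
  have hc1 : a⁻¹ * b = 1 := fix_one φ hcop _ _ hcc hφc hφu
  exact inv_mul_eq_one.mp hc1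

/-- Let `φ` be an automorphism of a finite nilpotent group `G` of order coprime to `|G|`.
Then the map `θ : x ↦ x⁻¹ * φ x` is injective on the set `K = {g⁻¹ * φ g : g ∈ G}`. -/
theorem coprime_aut_commutator_map_injOn
    {G : Type*} [Group G] [Finite G] [Group.IsNilpotent G]
    (φ : MulAut G) (hcop : Nat.Coprime (orderOf φ) (Nat.card G)) :
    Set.InjOn (fun x : G => x⁻¹ * φ x) {x : G | ∃ g : G, x = g⁻¹ * φ g} :=
  key_aux (Nat.card G) G φ le_rfl hcop
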